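/- If β·t > 0, P ∈ (0,1), Q = β(P·t + (1-P)·f) ∈ (0,1), and the posterior given a signal equals the indifference point, i.e., P·β·t/Q = 1/(1+r), then P = f/(r·t + f); moreover in that case P < 1/(1+r) and P·(1 - β·t)/(1 - Q) < 1/(1+r), i.e., both non-V2V drivers and unsignaled V2V drivers strictly prefer recklessness. -/

import Mathlib

theorem stmt_9
    (r β t f P : ℝ)
    (hr : 1 < r) (hβ : β ∈ Set.Ioc (0:ℝ) 1)
    (hf : 0 ≤ f) (hft : f < t) (ht : t ≤ 1) (ht0 : 0 < t)
    (hβt : 0 < β * t)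
    (hP : P ∈ Set.Ioo (0:ℝ) 1)
    (hQ : β * (P * t + (1 - P) * f) ∈ Set.Ioo (0:ℝ) 1)
    (hindiff : P * β * t / (β * (P * t + (1 - P) * f)) = 1 / (1 + r)) :
    P = f / (r * t + f) ∧
    P < 1 / (1 + r) ∧
    P * (1 - β * t) / (1 - β * (P * t + (1 - P) * f)) < 1 / (1 + r) := by
  obtain ⟨hβ0, hβ1⟩ := hβ
  obtain ⟨hP0, hP1⟩ := hP
  obtain ⟨hQ0, hQ1⟩ := hQ
  have hr0 : (0:ℝ) < 1 + r := by linarith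
  -- cross-multiplied indifference
  have key : P * β * t * (1 + r) = β * (P * t + (1 - P) * f) := by
    field_simp at hindiff
    linear_combination β * hindiff
  have key2 : P * t * (1 + r) = P * t + (1 - P) * f := by
    apply mul_left_cancel₀ (ne_of_gt hβ0)
    linear_combination key
  have hPeq : P * (r * t + f) = f := by nlinarith [key2]
  have hrtf : (0:ℝ) < r * t + f := by nlinarith
  have h1 : P = f / (r * t + f) := by
    field_simp
    linarith [hPeq]
  have h2 : P < 1 / (1 + r) := by
    rw [h1, div_lt_div_iff₀ hrtf hr0]
    nlinarith
  refine ⟨h1, h2, ?_⟩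
  have hQ1' : 0 < 1 - β * (P * t + (1 - P) * f) := by linarith
  rw [div_lt_div_iff₀ hQ1' hr0]
  have hP1r : P * (1 + r) < 1 := by
    have := (lt_div_iff₀ hr0).mp h2
    linarith
  nlinarith [key, hP1r, hQ0]
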